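/- Uniformly locally L^p functions lie in the two-dimensional Kato class: let p > 1 and let V : ℝ² → ℝ be a measurable function with M := sup_{x ∈ ℝ²} ( ∫_{B₁(x)} |V(y)|^p dy )^{1/p} < ∞. Then lim_{r → 0⁺} sup_{x ∈ ℝ²} ∫_{B_r(x)} (−log|x − y|) |V(y)| dy = 0; that is, for every ε > 0 there exists r₀ ∈ (0,1) such that for all r ∈ (0,r₀) and all x ∈ ℝ², ∫_{B_r(x)} (−log|x − y|) |V(y)| dy ≤ ε. -/

import Mathlib

open MeasureTheory Real
open scoped ENNReal NNReal

noncomputable section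

abbrev R2 : Type := EuclideanSpace ℝ (Fin 2)

open Set Metric Module in
/-- Polar-type formula for the Lebesgue integral of a radial `ℝ≥0∞`-valued function. -/
theorem lintegral_fun_norm_addHaar_ennreal
    {E : Type*} [NormedAddCommGroup E] [NormedSpace ℝ E] [Nontrivial E]
    [MeasurableSpace E] [BorelSpace E] [FiniteDimensional ℝ E]
    (μ : Measure E) [μ.IsAddHaarMeasure] (g : ℝ → ℝ≥0∞) (hg : Measurable g) :
    ∫⁻ x, g ‖x‖ ∂μ = μ.toSphere univ *
      ∫⁻ y in Ioi (0 : ℝ), ENNReal.ofReal (y ^ (finrank ℝ E - 1)) * g y :=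
  calc
    ∫⁻ x, g ‖x‖ ∂μ = ∫⁻ x : ({(0 : E)}ᶜ : Set E), g ‖(x : E)‖ ∂(μ.comap (↑)) :=
      ((lintegral_subtype_comap (measurableSet_singleton (0:E)).compl
        (fun a => g ‖a‖)).trans (by rw [MeasureTheory.restrict_compl_singleton])).symm
    _ = ∫⁻ p : sphere (0:E) 1 × Ioi (0:ℝ), g p.2
          ∂(μ.toSphere.prod (.volumeIoiPow (finrank ℝ E - 1))) :=
      (by simpa only [homeomorphUnitSphereProd_apply_snd_coe] using
            μ.measurePreserving_homeomorphUnitSphereProd.lintegral_comp_emb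
              (Homeomorph.measurableEmbedding _) (fun p => g p.2))
    _ = μ.toSphere univ *
        ∫⁻ y : Ioi (0:ℝ), g y ∂(Measure.volumeIoiPow (finrank ℝ E - 1)) := by
      rw [lintegral_prod (fun p : ↥(sphere (0:E) 1) × ↥(Ioi (0:ℝ)) => g p.2)
          (((hg.comp (measurable_subtype_coe.comp measurable_snd)) :
            Measurable fun p : ↥(sphere (0:E) 1) × ↥(Ioi (0:ℝ)) => g p.2).aemeasurable),
      ]
      simp [lintegral_const, mul_comm]
    _ = _ := by
      rw [Measure.volumeIoiPow, lintegral_withDensity_eq_lintegral_mul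
          (f := fun r : ↥(Ioi (0:ℝ)) => ENNReal.ofReal ((r:ℝ) ^ (finrank ℝ E - 1)))
          (g := fun y : ↥(Ioi (0:ℝ)) => g ↑y) _ (by fun_prop) (by fun_prop),
        ← lintegral_subtype_comap measurableSet_Ioi
          (fun y : ℝ => ENNReal.ofReal (y ^ (finrank ℝ E - 1)) * g y)]
      rfl

/-- Key elementary bound: `y * (-log y)^q ≤ (2q)^q` for `y ∈ (0,1)`. -/
theorem key_log_bound {q y : ℝ} (hq : 0 < q) (hy : 0 < y) (hy1 : y < 1) :
    y * (-Real.log y) ^ q ≤ (2 * q) ^ q := by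
  have hlog0 : 0 ≤ -Real.log y := neg_nonneg.2 (Real.log_nonpos hy.le hy1.le)
  have h1 : -Real.log y ≤ 2 * q * y ^ (-(1 / (2 * q))) := by
    have h := Real.log_le_rpow_div (inv_nonneg.2 hy.le) (show (0:ℝ) < 1 / (2 * q) by positivity)
    rw [Real.log_inv] at h
    calc -Real.log y ≤ (y⁻¹) ^ (1 / (2 * q)) / (1 / (2 * q)) := h
      _ = 2 * q * y ^ (-(1 / (2 * q))) := by
          rw [Real.inv_rpow hy.le, ← Real.rpow_neg hy.le, div_eq_mul_inv, one_div, inv_inv]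
          ring
  have h2 : (-Real.log y) ^ q ≤ (2 * q * y ^ (-(1 / (2 * q)))) ^ q :=
    Real.rpow_le_rpow hlog0 h1 hq.le
  have h3 : (2 * q * y ^ (-(1 / (2 * q)))) ^ q = (2 * q) ^ q * y ^ (-(1/2 : ℝ)) := by
    rw [Real.mul_rpow (by positivity) (Real.rpow_nonneg hy.le _), ← Real.rpow_mul hy.le]
    congr 2
    field_simp
  calc y * (-Real.log y) ^ q ≤ y * ((2 * q) ^ q * y ^ (-(1/2 : ℝ))) := by
        rw [← h3]; exact mul_le_mul_of_nonneg_left h2 hy.le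
    _ = (2 * q) ^ q * (y ^ (1:ℝ) * y ^ (-(1/2 : ℝ))) := by rw [Real.rpow_one]; ring
    _ = (2 * q) ^ q * y ^ (1/2 : ℝ) := by rw [← Real.rpow_add hy]; norm_num
    _ ≤ (2 * q) ^ q * 1 :=
        mul_le_mul_of_nonneg_left (Real.rpow_le_one hy.le hy1.le (by norm_num)) (by positivity)
    _ = (2 * q) ^ q := mul_one _

/-- Uniformly locally `L^p` functions lie in the two-dimensional Kato
class: if `p > 1` and `sup_x (∫_{B₁(x)} |V|^p)^{1/p} < ∞`, then
`lim_{r→0⁺} sup_x ∫_{B_r(x)} (−log|x−y|)|V(y)| dy = 0`. -/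
theorem unifLocLp_subset_Kato
    (p : ℝ) (hp : 1 < p) (V : R2 → ℝ) (hV : Measurable V)
    (hM : ∃ M : ENNReal, M < ⊤ ∧ ∀ x : R2,
      (∫⁻ y in Metric.ball x 1, ENNReal.ofReal (|V y| ^ p)) ^ (1 / p) ≤ M) :
    ∀ ε : ℝ, 0 < ε → ∃ r₀ : ℝ, 0 < r₀ ∧ r₀ < 1 ∧
      ∀ r : ℝ, 0 < r → r < r₀ → ∀ x : R2,
        (∫⁻ y in Metric.ball x r, ENNReal.ofReal ((-Real.log ‖x - y‖) * |V y|))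
          ≤ ENNReal.ofReal ε := by
  classical
  obtain ⟨M, hMlt, hMb⟩ := hM
  intro ε hε
  have hp0 : (0:ℝ) < p := lt_trans one_pos hp
  set q : ℝ := Real.conjExponent p with hq_def
  have hpq : q.HolderConjugate p := (Real.HolderConjugate.conjExponent hp).symm
  have hq1 : 1 < q := hpq.lt
  have hq0 : (0:ℝ) < q := lt_trans one_pos hq1
  -- the kernel density
  set K : R2 → ℝ≥0∞ := fun z => ENNReal.ofReal ((-Real.log ‖z‖) ^ q) with hK
  have hKmeas : Measurable K := by
    apply Measurable.ennreal_ofReal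
    measurability
  set ν : Measure R2 := volume.withDensity K with hν
  have hν_ball : ∀ r : ℝ, ν (Metric.ball (0:R2) r) = ∫⁻ z in Metric.ball (0:R2) r, K z :=
    fun r => withDensity_apply K measurableSet_ball
  -- finiteness of the kernel integral on the unit ball
  have hfin : ν (Metric.ball (0:R2) 1) < ⊤ := by
    rw [hν_ball]
    set g₁ : ℝ → ℝ≥0∞ :=
      fun t => Set.indicator (Set.Ico (0:ℝ) 1) (fun t => ENNReal.ofReal ((-Real.log t) ^ q)) t
      with hg₁
    have hg₁meas : Measurable g₁ := by
      apply Measurable.indicator _ measurableSet_Ico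
      apply Measurable.ennreal_ofReal
      measurability
    have h1 : ∫⁻ z in Metric.ball (0:R2) 1, K z = ∫⁻ z : R2, g₁ ‖z‖ := by
      rw [← lintegral_indicator measurableSet_ball]
      apply lintegral_congr
      intro z
      simp only [hg₁, Set.indicator_apply]
      by_cases hz : ‖z‖ < 1
      · rw [if_pos (by simpa [mem_ball_zero_iff] using hz),
          if_pos (by simp [Set.mem_Ico, hz, norm_nonneg])]
      · rw [if_neg (by simpa [mem_ball_zero_iff] using hz),
          if_neg (by simp [Set.mem_Ico, hz])]
    rw [h1, lintegral_fun_norm_addHaar_ennreal volume g₁ hg₁meas]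
    apply ENNReal.mul_lt_top (measure_lt_top _ _)
    have hdim : Module.finrank ℝ R2 - 1 = 1 := by
      simp [finrank_euclideanSpace_fin]
    rw [hdim]
    have hpt : ∀ y : ℝ, y ∈ Set.Ioi (0:ℝ) →
        ENNReal.ofReal (y ^ 1) * g₁ y ≤
          Set.indicator (Set.Ioo (0:ℝ) 1) (fun _ => ENNReal.ofReal ((2 * q) ^ q)) y := by
      intro y hy
      rw [Set.mem_Ioi] at hy
      simp only [hg₁, Set.indicator_apply]
      by_cases hy1 : y < 1
      · rw [if_pos (by simp [Set.mem_Ico, hy.le, hy1]),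
          if_pos (by simp [Set.mem_Ioo, hy, hy1]), pow_one,
          ← ENNReal.ofReal_mul hy.le]
        exact ENNReal.ofReal_le_ofReal (key_log_bound hq0 hy hy1)
      · rw [if_neg (by simp [Set.mem_Ico, hy1]), mul_zero]
        exact zero_le
    calc ∫⁻ y in Set.Ioi (0:ℝ), ENNReal.ofReal (y ^ 1) * g₁ y
        ≤ ∫⁻ y in Set.Ioi (0:ℝ),
            Set.indicator (Set.Ioo (0:ℝ) 1) (fun _ => ENNReal.ofReal ((2 * q) ^ q)) y :=
          setLIntegral_mono' measurableSet_Ioi hpt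
      _ ≤ ∫⁻ y : ℝ,
            Set.indicator (Set.Ioo (0:ℝ) 1) (fun _ => ENNReal.ofReal ((2 * q) ^ q)) y :=
          setLIntegral_le_lintegral _ _
      _ = ENNReal.ofReal ((2 * q) ^ q) * volume (Set.Ioo (0:ℝ) 1) :=
          lintegral_indicator_const measurableSet_Ioo _
      _ < ⊤ := by
          apply ENNReal.mul_lt_top ENNReal.ofReal_lt_top
          simp [Real.volume_Ioo]
  -- the kernel integrals shrink to 0
  have hanti : Antitone (fun n : ℕ => Metric.ball (0:R2) (1 / (n + 1))) := by
    intro n m hnm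
    apply Metric.ball_subset_ball
    apply one_div_le_one_div_of_le (by positivity)
    exact_mod_cast add_le_add_left (Nat.cast_le.mpr hnm) 1
  have hInter : (⋂ n : ℕ, Metric.ball (0:R2) (1 / (n + 1))) = {0} := by
    ext z
    simp only [Set.mem_iInter, mem_ball_zero_iff, Set.mem_singleton_iff]
    constructor
    · intro h
      by_contra hz
      obtain ⟨n, hn⟩ := exists_nat_one_div_lt (norm_pos_iff.mpr hz)
      exact absurd (h n) (not_lt.mpr hn.le)
    · rintro rfl
      intro n
      simp only [norm_zero]
      positivity
  have hν0 : ν ({(0:R2)} : Set R2) = 0 := by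
    rw [hν, withDensity_apply _ (measurableSet_singleton _)]
    exact setLIntegral_measure_zero _ _ (measure_singleton _)
  have hseq : Filter.Tendsto (fun n : ℕ => ν (Metric.ball (0:R2) (1 / (n + 1))))
      Filter.atTop (nhds 0) := by
    have := tendsto_measure_iInter_atTop (μ := ν)
      (fun n : ℕ => measurableSet_ball.nullMeasurableSet) hanti
      ⟨0, by
        rw [show (1 : ℝ) / ((0:ℕ) + 1) = 1 by norm_num]
        exact hfin.ne⟩
    rw [hInter, hν0] at this
    exact this
  -- choose the radius
  have hM1ne : M + 1 ≠ ⊤ := by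
    rw [ENNReal.add_ne_top]
    exact ⟨hMlt.ne, ENNReal.one_ne_top⟩
  have hM1pos : M + 1 ≠ 0 := by
    intro h
    simpa using (le_antisymm (h ▸ le_add_self) (zero_le : (0:ℝ≥0∞) ≤ 1) : (1:ℝ≥0∞) = 0)
  set A : ℝ≥0∞ := ENNReal.ofReal ε / (M + 1) with hA_def
  have hApos : 0 < A := ENNReal.div_pos (ENNReal.ofReal_pos.mpr hε).ne' hM1ne
  have hAne : A ≠ ⊤ := (ENNReal.div_lt_top ENNReal.ofReal_ne_top hM1pos).ne
  set δ : ℝ≥0∞ := A ^ q with hδ_def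
  have hδpos : 0 < δ := ENNReal.rpow_pos hApos hAne
  obtain ⟨n, hn⟩ := (hseq.eventually_lt_const hδpos).exists
  refine ⟨min (1 / (n + 1)) 2⁻¹, lt_min (by positivity) (by norm_num),
    lt_of_le_of_lt (min_le_right _ _) (by norm_num), ?_⟩
  intro r hr hrr₀ x
  have hr1 : r < 1 := lt_of_lt_of_le hrr₀ ((min_le_right _ _).trans (by norm_num))
  have hrn : r ≤ 1 / (n + 1) := (le_of_lt hrr₀).trans (min_le_left _ _)
  -- nonnegativity of the kernel on the ball
  have hker_nonneg : ∀ y : R2, y ∈ Metric.ball x r → 0 ≤ -Real.log ‖x - y‖ := by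
    intro y hy
    have h1 : ‖x - y‖ < 1 := by
      have := Metric.mem_ball'.mp hy
      rw [dist_eq_norm] at this
      linarith
    exact neg_nonneg.2 (Real.log_nonpos (norm_nonneg _) h1.le)
  -- split the integrand as a product
  have hsplit : ∫⁻ y in Metric.ball x r, ENNReal.ofReal ((-Real.log ‖x - y‖) * |V y|)
      = ∫⁻ y in Metric.ball x r,
          ENNReal.ofReal (-Real.log ‖x - y‖) * ENNReal.ofReal (|V y|) := by
    apply setLIntegral_congr_fun measurableSet_ball
    intro y hy
    exact ENNReal.ofReal_mul (hker_nonneg y hy)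
  rw [hsplit]
  -- Hölder's inequality
  have hHolder := ENNReal.lintegral_mul_le_Lp_mul_Lq
    (volume.restrict (Metric.ball x r)) hpq
    (f := fun y => ENNReal.ofReal (-Real.log ‖x - y‖))
    (g := fun y => ENNReal.ofReal (|V y|))
    ((Real.measurable_log.comp ((measurable_const.sub measurable_id).norm)).neg.ennreal_ofReal.aemeasurable)
    (hV.abs.ennreal_ofReal.aemeasurable)
  simp only [Pi.mul_apply] at hHolder
  refine le_trans hHolder ?_
  -- bound the kernel factor
  have hker : ∫⁻ y in Metric.ball x r, ENNReal.ofReal (-Real.log ‖x - y‖) ^ q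
      = ν (Metric.ball (0:R2) r) := by
    have h1 : ∫⁻ y in Metric.ball x r, ENNReal.ofReal (-Real.log ‖x - y‖) ^ q
        = ∫⁻ y in Metric.ball x r, ENNReal.ofReal ((-Real.log ‖x - y‖) ^ q) := by
      apply setLIntegral_congr_fun measurableSet_ball
      intro y hy
      exact ENNReal.ofReal_rpow_of_nonneg (hker_nonneg y hy) hq0.le
    rw [h1, hν_ball]
    have hmp : MeasurePreserving (fun z : R2 => x - z) volume volume :=
      Measure.measurePreserving_sub_left volume x
    have himg : (fun z : R2 => x - z) '' Metric.ball (0:R2) r = Metric.ball x r := by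
      ext y
      constructor
      · rintro ⟨z, hz, rfl⟩
        rw [mem_ball_zero_iff] at hz
        rw [Metric.mem_ball, dist_eq_norm]
        simpa using hz
      · intro hy
        refine ⟨x - y, ?_, by show x - (x - y) = y; abel⟩
        rw [mem_ball_zero_iff]
        rw [Metric.mem_ball, dist_eq_norm] at hy
        rw [← norm_neg]
        simpa [neg_sub] using hy
    have := hmp.setLIntegral_comp_emb (MeasurableEquiv.subLeft x).measurableEmbedding
      (fun y => ENNReal.ofReal ((-Real.log ‖x - y‖) ^ q)) (Metric.ball (0:R2) r)
    rw [himg] at this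
    rw [← this]
    apply setLIntegral_congr_fun measurableSet_ball
    intro z _
    rw [hK]
    simp
  have hker_le : (∫⁻ y in Metric.ball x r, ENNReal.ofReal (-Real.log ‖x - y‖) ^ q) ^ (1/q) ≤ A := by
    rw [hker]
    have h2 : ν (Metric.ball (0:R2) r) ≤ δ := by
      refine le_trans ?_ hn.le
      exact measure_mono (Metric.ball_subset_ball hrn)
    calc (ν (Metric.ball (0:R2) r)) ^ (1/q) ≤ δ ^ (1/q) :=
          ENNReal.rpow_le_rpow h2 (by positivity)
      _ = A := by
          rw [hδ_def, one_div, ENNReal.rpow_rpow_inv hq0.ne']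
  -- bound the potential factor
  have hV_le : (∫⁻ y in Metric.ball x r, ENNReal.ofReal (|V y|) ^ p) ^ (1/p) ≤ M := by
    refine le_trans ?_ (hMb x)
    apply ENNReal.rpow_le_rpow _ (by positivity)
    refine le_trans (le_of_eq ?_) (lintegral_mono_set (Metric.ball_subset_ball hr1.le))
    apply setLIntegral_congr_fun measurableSet_ball
    intro y _
    exact ENNReal.ofReal_rpow_of_nonneg (abs_nonneg _) hp0.le
  calc (∫⁻ y in Metric.ball x r, ENNReal.ofReal (-Real.log ‖x - y‖) ^ q) ^ (1/q) *
        (∫⁻ y in Metric.ball x r, ENNReal.ofReal (|V y|) ^ p) ^ (1/p)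
      ≤ A * M := mul_le_mul' hker_le hV_le
    _ ≤ A * (M + 1) := mul_le_mul_right le_self_add _
    _ = ENNReal.ofReal ε := by
        rw [hA_def, ENNReal.div_mul_cancel hM1pos hM1ne]
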